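/- Let γ : ℝ/ℤ → 𝕋 × ℝ be a C¹ embedded essential curve, and let s₀, s₁ ∈ ℝ/ℤ with s₀ ≠ s₁ both achieve the maximal height: p₂(γ(s₀)) = p₂(γ(s₁)) = max_{s} p₂(γ(s)). Then the angle variation along γ between γ(s₀) and γ(s₁) is zero: Var_γ(γ(s₀), γ(s₁)) = 0. -/

import Mathlib

open Set Filter Function

noncomputable section

/-- Unit vector at angle `θ` (measured in full turns, counterclockwise)
from the vertical vector `χ = (0,1)`. -/
def angVec (θ : ℝ) : ℝ × ℝ := (-Real.sin (2 * Real.pi * θ), Real.cos (2 * Real.pi * θ))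

/-- `θ` is a continuous determination of the (oriented) angle, measured in full
turns from the vertical `(0,1)`, of the path of nonzero vectors `v`. -/
def IsAngleDet (v : ℝ → ℝ × ℝ) (θ : ℝ → ℝ) : Prop :=
  Continuous θ ∧ ∀ t, ∃ r : ℝ, 0 < r ∧ v t = r • angVec (θ t)

/-- A (lifted to `ℝ²`) isotopy of `C¹` diffeomorphisms of the annulus
`𝕋 × ℝ`, starting at the identity, extended to nonnegative times by
`F (t+1) = F t ∘ F 1`.  The field `per` expresses that each `F t` is the lift
of a map of the annulus. -/
structure Isotopy where
  F : ℝ → ℝ × ℝ → ℝ × ℝ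
  init : F 0 = id
  cont : Continuous fun p : ℝ × (ℝ × ℝ) => F p.1 p.2
  smooth : ∀ t, ContDiff ℝ 1 (F t)
  bij : ∀ t, Function.Bijective (F t)
  fderiv_bij : ∀ t x, Function.Bijective (fderiv ℝ (F t) x)
  per : ∀ t x, F t (x + (1, 0)) = F t x + (1, 0)
  ext : ∀ t : ℝ, 0 ≤ t → ∀ x, F (t + 1) x = F t (F 1 x)

/-- Negative-torsion map: at every point, the torsion at finite time 1 of the
vertical vector `χ = (0,1)` is negative
(`Torsion₁(f,x,χ) = θ 1 - θ 0 < 0` for any continuous determination `θ`). -/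
def NegTorsion (J : Isotopy) : Prop :=
  ∀ x : ℝ × ℝ, ∀ θ : ℝ → ℝ,
    IsAngleDet (fun t => fderiv ℝ (J.F t) x ((0 : ℝ), (1 : ℝ))) θ → θ 1 - θ 0 < 0

/-- A lift `Γ : ℝ → ℝ²` of a `C¹` embedded essential curve of the annulus
`𝕋 × ℝ`; the curve is homotopic to `c₁` (if `e = 1`) or to `c₋₁` (if `e = -1`). -/
structure EssC1Curve where
  Γ : ℝ → ℝ × ℝ
  e : ℝ
  he : e = 1 ∨ e = -1
  smooth : ContDiff ℝ 1 Γ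
  tangent_ne : ∀ t, deriv Γ t ≠ 0
  inj : ∀ s t, Γ s = Γ t → ∃ k : ℤ, t = s + (k : ℝ)
  per : ∀ t, Γ (t + 1) = Γ t + (e, 0)

local notation "π" => Real.pi

/-- A continuous function with integer values is constant on an interval. -/
lemma intval_const {f : ℝ → ℝ} (hf : Continuous f) {s t : ℝ} (hst : s ≤ t)
    (h : ∀ u ∈ Set.Icc s t, ∃ k : ℤ, f u = k) : f s = f t := by
  by_contra hne
  obtain ⟨ks, hks⟩ := h s ⟨le_refl s, hst⟩
  obtain ⟨kt, hkt⟩ := h t ⟨hst, le_refl t⟩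
  have hkskt : ks ≠ kt := by rintro rfl; exact hne (hks.trans hkt.symm)
  set v : ℝ := ((min ks kt : ℤ) : ℝ) + 1/2 with hv
  have hvmem : v ∈ Set.uIcc (f s) (f t) := by
    have hmem : ∀ x : ℤ, x = ks ∨ x = kt → ((min ks kt : ℤ):ℝ) ≤ (x:ℝ) ∧
        v ≤ ((max ks kt : ℤ):ℝ) := by
      intro x hx
      constructor
      · exact_mod_cast (by rcases hx with rfl | rfl; exacts [min_le_left _ _, min_le_right _ _])
      · rw [hv]
        have : min ks kt + 1 ≤ max ks kt := by omega
        have : ((min ks kt : ℤ):ℝ) + 1 ≤ ((max ks kt : ℤ):ℝ) := by exact_mod_cast this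
        linarith
    rw [Set.mem_uIcc]
    rcases le_total (f s) (f t) with hle | hle
    · left
      constructor
      · rw [hks, hv]
        have : (min ks kt : ℝ) ≤ (ks:ℝ) := by exact_mod_cast min_le_left _ _
        -- need min = ks here; since f s ≤ f t, ks ≤ kt
        have hkk : ks ≤ kt := by rw [hks, hkt] at hle; exact_mod_cast hle
        rw [min_eq_left hkk]; linarith
      · rw [hkt, hv]
        have hkk : ks ≤ kt := by rw [hks, hkt] at hle; exact_mod_cast hle
        rw [min_eq_left hkk]
        have : ks + 1 ≤ kt := by omega
        have : ((ks:ℝ)) + 1 ≤ (kt:ℝ) := by exact_mod_cast this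
        linarith
    · right
      constructor
      · rw [hkt, hv]
        have hkk : kt ≤ ks := by rw [hks, hkt] at hle; exact_mod_cast hle
        rw [min_eq_right hkk]; linarith
      · rw [hks, hv]
        have hkk : kt ≤ ks := by rw [hks, hkt] at hle; exact_mod_cast hle
        rw [min_eq_right hkk]
        have : kt + 1 ≤ ks := by omega
        have : ((kt:ℝ)) + 1 ≤ (ks:ℝ) := by exact_mod_cast this
        linarith
  obtain ⟨u, hu, huv⟩ := intermediate_value_uIcc (a := s) (b := t) (hf.continuousOn) hvmem
  have huI : u ∈ Set.Icc s t := by rwa [Set.uIcc_of_le hst] at hu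
  obtain ⟨k, hk⟩ := h u huI
  rw [huv, hv] at hk
  have : (2*k : ℤ) = 2 * min ks kt + 1 := by
    have : (2*(k:ℝ)) = 2 * ((min ks kt : ℤ):ℝ) + 1 := by linarith [hk.symm]
    exact_mod_cast this
  omega

/-- `sin (2πx)` is periodic with integer shifts. -/
lemma sin2pi_add_int (x : ℝ) (k : ℤ) : Real.sin (2*π*(x + k)) = Real.sin (2*π*x) := by
  rw [show 2*π*(x+k) = 2*π*x + k*(2*π) by ring, Real.sin_add_int_mul_two_pi]

lemma cos2pi_add_int (x : ℝ) (k : ℤ) : Real.cos (2*π*(x + k)) = Real.cos (2*π*x) := by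
  rw [show 2*π*(x+k) = 2*π*x + k*(2*π) by ring, Real.cos_add_int_mul_two_pi]

lemma sin2pi_pos {x : ℝ} (k : ℤ) (h1 : (k:ℝ) < x) (h2 : x < k + 1/2) :
    0 < Real.sin (2*π*x) := by
  have : Real.sin (2*π*x) = Real.sin (2*π*(x - k)) := by
    rw [show x = (x - k) + k by ring] ; rw [sin2pi_add_int]; ring_nf
  rw [this]
  apply Real.sin_pos_of_pos_of_lt_pi
  · have : (0:ℝ) < x - k := by linarith
    positivity
  · have h3 : x - k < 1/2 := by linarith
    have : 2*π*(x - k) < 2*π*(1/2) := by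
      apply mul_lt_mul_of_pos_left h3 (by positivity)
    linarith [this]

lemma sin2pi_zero_cases {x : ℝ} (k : ℤ) (hx1 : (k:ℝ) + 1/2 ≤ x) (hx2 : x ≤ (k:ℝ) + 1)
    (h : Real.sin (2*π*x) = 0) : x = (k:ℝ) + 1/2 ∨ x = (k:ℝ) + 1 := by
  by_contra hcon
  push_neg at hcon
  have h1 : (k:ℝ) + 1/2 < x := lt_of_le_of_ne hx1 (Ne.symm hcon.1)
  have h2 : x < (k:ℝ) + 1 := lt_of_le_of_ne hx2 hcon.2
  have hs : Real.sin (2*π*x) = Real.sin (2*π*(x - k)) := by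
    rw [show x = (x - k) + k by ring]; rw [sin2pi_add_int]; ring_nf
  have hneg : Real.sin (2*π*(x-k)) < 0 := by
    have : Real.sin (2*π*(x-k)) = -Real.sin (2*π*(x-k) - π) := by
      rw [Real.sin_sub_pi]; ring
    rw [this, neg_lt, neg_zero]
    apply Real.sin_pos_of_pos_of_lt_pi
    · have : 1/2 < x - k := by linarith
      nlinarith [Real.pi_pos]
    · have : x - k < 1 := by linarith
      nlinarith [Real.pi_pos]
  rw [hs] at h
  exact absurd h hneg.ne

/-- the end-position of an angle whose vector is horizontal. -/
def sig (x : ℝ) : ℝ := if 0 < Real.cos (2*π*x) then 1/2 else 0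

lemma sig_cases (x : ℝ) : sig x = 0 ∨ sig x = 1/2 := by
  unfold sig; split <;> simp

lemma sig_neg (x : ℝ) : sig (-x) = sig x := by
  unfold sig
  rw [show 2*π*(-x) = -(2*π*x) by ring, Real.cos_neg]

lemma sig_int_add_half (k : ℤ) : sig ((k:ℝ) + 1/2) = 0 := by
  unfold sig
  rw [show (k:ℝ) + 1/2 = 1/2 + k by ring, cos2pi_add_int,
    show 2*π*(1/2) = π by ring, Real.cos_pi]
  norm_num

lemma sig_int_add_one (k : ℤ) : sig ((k:ℝ) + 1) = 1/2 := by
  unfold sig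
  rw [show (k:ℝ) + 1 = 0 + (k+1 : ℤ) by push_cast; ring, cos2pi_add_int,
    show 2*π*0 = 0 by ring, Real.cos_zero]
  norm_num

/-- Trap lemma (lower half-plane): if `sin (2πφ) ≤ 0` on `[0,1]` and vanishes at the
endpoints then the total variation is determined by the endpoint positions. -/
lemma trap_lower {φ : ℝ → ℝ} (hφ : Continuous φ)
    (hs : ∀ t ∈ Set.Icc (0:ℝ) 1, Real.sin (2*π*φ t) ≤ 0)
    (h0 : Real.sin (2*π*φ 0) = 0) (h1 : Real.sin (2*π*φ 1) = 0) :
    φ 1 - φ 0 = sig (φ 1) - sig (φ 0) := by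
  obtain ⟨tm, htm, hmin⟩ := isCompact_Icc.exists_isMinOn (Set.nonempty_Icc.2 zero_le_one)
    hφ.continuousOn
  have hmin' : ∀ t ∈ Set.Icc (0:ℝ) 1, φ tm ≤ φ t := fun t ht => hmin ht
  -- no value of φ on [0,1] lies in an open interval (k, k+1/2)
  have hnot : ∀ u ∈ Set.Icc (0:ℝ) 1, ∀ k' : ℤ, ¬((k':ℝ) < φ u ∧ φ u < (k':ℝ) + 1/2) := by
    rintro u hu k' ⟨ha, hb⟩
    exact absurd (hs u hu) (not_le.2 (sin2pi_pos k' ha hb))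
  set m := φ tm with hm
  set k : ℤ := ⌊m⌋ with hk
  -- IVT helper: every value between m and some attained value is attained on [0,1]
  have hIVT : ∀ t ∈ Set.Icc (0:ℝ) 1, ∀ v, m ≤ v → v ≤ φ t →
      ∃ u ∈ Set.Icc (0:ℝ) 1, φ u = v := by
    intro t ht v hv1 hv2
    have : v ∈ Set.uIcc (φ tm) (φ t) := by
      rw [Set.mem_uIcc]; left; exact ⟨hv1, hv2⟩
    obtain ⟨u, hu, huv⟩ := intermediate_value_uIcc (hφ.continuousOn) this
    exact ⟨u, Set.uIcc_subset_Icc htm ht hu, huv⟩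
  rcases eq_or_lt_of_le (Int.floor_le m) with hcase | hcase
  · -- m is an integer: φ is constant on [0,1]
    have hconst : ∀ t ∈ Set.Icc (0:ℝ) 1, φ t = m := by
      intro t ht
      by_contra hne
      have hlt : m < φ t := lt_of_le_of_ne (hmin' t ht) (Ne.symm hne)
      set d := φ t - m with hd
      set v := m + min d (1/2) / 2 with hv
      have hdm : 0 < min d (1/2) := lt_min (by linarith) (by norm_num)
      have h1v : m ≤ v := by rw [hv]; linarith
      have h2v : v ≤ φ t := by
        rw [hv]
        have : min d (1/2) ≤ d := min_le_left _ _
        linarith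
      obtain ⟨u, hu, huv⟩ := hIVT t ht v h1v h2v
      refine hnot u hu k ⟨?_, ?_⟩
      · rw [huv, hv, ← hcase]; linarith
      · rw [huv, hv, ← hcase]
        have : min d (1/2) ≤ 1/2 := min_le_right _ _
        linarith
    rw [hconst 1 (by norm_num), hconst 0 (by norm_num)]
    ring
  · -- m is not an integer: everything is trapped in [k + 1/2, k + 1]
    have hmlow : (k:ℝ) + 1/2 ≤ m := by
      by_contra hcon
      push_neg at hcon
      exact hnot tm htm k ⟨hcase, hcon⟩
    have hup : ∀ t ∈ Set.Icc (0:ℝ) 1, φ t ≤ (k:ℝ) + 1 := by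
      intro t ht
      by_contra hcon
      push_neg at hcon
      set d := φ t - ((k:ℝ)+1) with hd
      set v := ((k:ℝ)+1) + min d (1/2) / 2 with hv
      have hdm : 0 < min d (1/2) := lt_min (by linarith) (by norm_num)
      have h1v : m ≤ v := by
        have : m < (k:ℝ) + 1 := by
          have := Int.lt_floor_add_one m; linarith
        rw [hv]; linarith
      have h2v : v ≤ φ t := by
        rw [hv]
        have : min d (1/2) ≤ d := min_le_left _ _
        linarith
      obtain ⟨u, hu, huv⟩ := hIVT t ht v h1v h2v
      refine hnot u hu (k+1) ⟨?_, ?_⟩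
      · rw [huv, hv]; push_cast; linarith
      · rw [huv, hv]
        have : min d (1/2) ≤ 1/2 := min_le_right _ _
        push_cast; linarith
    have hlow : ∀ t ∈ Set.Icc (0:ℝ) 1, (k:ℝ) + 1/2 ≤ φ t :=
      fun t ht => le_trans hmlow (hmin' t ht)
    have c0 := sin2pi_zero_cases k (hlow 0 (by norm_num)) (hup 0 (by norm_num)) h0
    have c1 := sin2pi_zero_cases k (hlow 1 (by norm_num)) (hup 1 (by norm_num)) h1
    rcases c0 with e0 | e0 <;> rcases c1 with e1 | e1 <;>
      rw [e0, e1] <;>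
      simp only [sig_int_add_half, sig_int_add_one] <;> norm_num

/-- Trap lemma (upper half-plane). -/
lemma trap_upper {φ : ℝ → ℝ} (hφ : Continuous φ)
    (hs : ∀ t ∈ Set.Icc (0:ℝ) 1, 0 ≤ Real.sin (2*π*φ t))
    (h0 : Real.sin (2*π*φ 0) = 0) (h1 : Real.sin (2*π*φ 1) = 0) :
    φ 1 - φ 0 = sig (φ 0) - sig (φ 1) := by
  have key := trap_lower (φ := fun t => -(φ t)) hφ.neg ?_ ?_ ?_
  · rw [sig_neg, sig_neg] at key
    linarith
  · intro t ht
    rw [show 2*π*(-(φ t)) = -(2*π*φ t) by ring, Real.sin_neg]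
    linarith [hs t ht]
  · rw [show 2*π*(-(φ 0)) = -(2*π*φ 0) by ring, Real.sin_neg, h0, neg_zero]
  · rw [show 2*π*(-(φ 1)) = -(2*π*φ 1) by ring, Real.sin_neg, h1, neg_zero]

lemma re_div_pos {z w : ℂ} (hw : w ≠ 0) (h : ‖z - w‖ < ‖w‖) :
    0 < (z / w).re := by
  have habs : 0 < ‖w‖ := norm_pos_iff.2 hw
  have h3 : z / w = 1 + (z - w) / w := by field_simp; ring
  rw [h3, Complex.add_re, Complex.one_re]
  have h4 : ‖(z - w) / w‖ < 1 := by
    rw [norm_div]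
    exact (div_lt_one habs).2 h
  have h5 := Complex.abs_re_le_norm ((z - w) / w)
  have h6 := neg_abs_le ((z - w) / w).re
  have h7 : |((z - w) / w).re| ≤ ‖(z - w) / w‖ := h5
  linarith [abs_le.1 h7 |>.1]

/-- unit vector of a nonzero complex number -/
def unitc (z : ℂ) : ℂ := z / ((‖z‖ : ℝ) : ℂ)

lemma unitc_ne {z : ℂ} (hz : z ≠ 0) : unitc z ≠ 0 := by
  unfold unitc
  apply div_ne_zero hz
  simp [hz]

lemma abs_mul_unitc {z : ℂ} (hz : z ≠ 0) : ((‖z‖ : ℝ) : ℂ) * unitc z = z := by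
  unfold unitc
  have : ((‖z‖ : ℝ) : ℂ) ≠ 0 := by simp [hz]
  field_simp

lemma exp_arg_eq_unitc {z : ℂ} (hz : z ≠ 0) : Complex.exp ((z.arg : ℂ) * Complex.I) = unitc z := by
  have h := Complex.norm_mul_exp_arg_mul_I z
  unfold unitc
  have habs : ((‖z‖ : ℝ) : ℂ) ≠ 0 := by simp [hz]
  field_simp
  rw [mul_comm]
  exact h

lemma unitc_div {P Q : ℂ} (hP : P ≠ 0) (hQ : Q ≠ 0) :
    unitc (P / Q) = unitc P / unitc Q := by
  unfold unitc
  rw [norm_div]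
  have hPa : ((‖P‖ : ℝ) : ℂ) ≠ 0 := by simp [hP]
  have hQa : ((‖Q‖ : ℝ) : ℂ) ≠ 0 := by simp [hQ]
  push_cast
  field_simp

lemma unitc_mul_ratio {P Q : ℂ} (hP : P ≠ 0) (hQ : Q ≠ 0) :
    unitc Q * unitc (P / Q) = unitc P := by
  rw [unitc_div hP hQ]
  have := unitc_ne hQ
  field_simp

/-- `x` is a continuous angle determination (in turns) of `V`. -/
def LiftsOf (V : ℂ) (x : ℝ) : Prop :=
  V = ((‖V‖ : ℝ) : ℂ) * Complex.exp (((2*π*x : ℝ) : ℂ) * Complex.I)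

lemma liftsOf_exp {V : ℂ} {x : ℝ} (h : LiftsOf V x) (hV : V ≠ 0) :
    Complex.exp (((2*π*x : ℝ) : ℂ) * Complex.I) = unitc V := by
  unfold LiftsOf at h
  unfold unitc
  have habs : ((‖V‖ : ℝ) : ℂ) ≠ 0 := by simp [hV]
  rw [eq_div_iff habs, mul_comm]
  exact h.symm

lemma liftsOf_of_exp {V : ℂ} {x : ℝ} (hV : V ≠ 0)
    (h : Complex.exp (((2*π*x : ℝ) : ℂ) * Complex.I) = unitc V) : LiftsOf V x := by
  unfold LiftsOf
  rw [h]
  exact (abs_mul_unitc hV).symm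

lemma liftsOf_im {V : ℂ} {x : ℝ} (h : LiftsOf V x) :
    V.im = ‖V‖ * Real.sin (2*π*x) := by
  conv_lhs => rw [h]
  simp only [Complex.mul_im, Complex.ofReal_re, Complex.ofReal_im,
    Complex.exp_ofReal_mul_I_re, Complex.exp_ofReal_mul_I_im, zero_mul, mul_zero,
    add_zero, sub_zero, zero_add]

lemma liftsOf_re {V : ℂ} {x : ℝ} (h : LiftsOf V x) :
    V.re = ‖V‖ * Real.cos (2*π*x) := by
  conv_lhs => rw [h]
  simp only [Complex.mul_re, Complex.ofReal_re, Complex.ofReal_im,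
    Complex.exp_ofReal_mul_I_re, Complex.exp_ofReal_mul_I_im, zero_mul, mul_zero,
    add_zero, sub_zero, zero_add]

/-- two angle determinations of the same nonzero vector differ by an integer. -/
lemma liftsOf_sub_int {V : ℂ} {x y : ℝ} (hV : V ≠ 0) (hx : LiftsOf V x) (hy : LiftsOf V y) :
    ∃ k : ℤ, y - x = k := by
  have h1 := liftsOf_exp hx hV
  have h2 := liftsOf_exp hy hV
  have h3 : Complex.exp (((2*π*y : ℝ) : ℂ) * Complex.I - ((2*π*x : ℝ) : ℂ) * Complex.I) = 1 := by
    rw [Complex.exp_sub, h1, h2]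
    field_simp [unitc_ne hV]
  rw [Complex.exp_eq_one_iff] at h3
  obtain ⟨n, hn⟩ := h3
  refine ⟨n, ?_⟩
  have h4 : (((2*π*y - 2*π*x : ℝ)) : ℂ) * Complex.I = (((n:ℝ) * (2*π) : ℝ) : ℂ) * Complex.I := by
    push_cast
    push_cast at hn
    rw [show ((2:ℂ)*π*y*Complex.I - 2*π*x*Complex.I) = (2*π*y - 2*π*x)*Complex.I by ring] at hn
    rw [hn]; ring
  have h5 : (2*π*y - 2*π*x : ℝ) = (n:ℝ) * (2*π) := by
    have := mul_right_cancel₀ Complex.I_ne_zero h4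
    exact_mod_cast this
  have h6 : (2*π) * (y-x) = (2*π) * (n:ℝ) := by ring_nf at h5 ⊢; linarith
  exact mul_left_cancel₀ (by positivity : (0:ℝ) < 2*π).ne' h6

/-- clamp to [0,1] -/
def clmp (x : ℝ) : ℝ := max 0 (min 1 x)

lemma clmp_mem (x : ℝ) : clmp x ∈ Set.Icc (0:ℝ) 1 :=
  ⟨le_max_left _ _, max_le zero_le_one (min_le_left _ _)⟩

lemma clmp_eq_self {x : ℝ} (hx : x ∈ Set.Icc (0:ℝ) 1) : clmp x = x := by
  unfold clmp
  rw [min_eq_right hx.2, max_eq_right hx.1]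

lemma clmp_lip (a b : ℝ) : |clmp a - clmp b| ≤ |a - b| := by
  unfold clmp
  calc |max 0 (min 1 a) - max 0 (min 1 b)|
      = |max (min 1 a) 0 - max (min 1 b) 0| := by rw [max_comm, max_comm (0:ℝ)]
    _ ≤ |min 1 a - min 1 b| := abs_max_sub_max_le_abs _ _ _
    _ ≤ max |(1:ℝ) - 1| |a - b| := abs_min_sub_min_le_max _ _ _ _
    _ = |a - b| := by simp

lemma clmp_min_one (x : ℝ) : clmp (min 1 x) = clmp x := by
  unfold clmp
  rw [← min_assoc, min_self]

lemma clmp_min_zero (x : ℝ) : clmp (min 0 x) = 0 := by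
  unfold clmp
  have h1 : min (0:ℝ) x ≤ 0 := min_le_left _ _
  rw [max_eq_left]
  have : min (1:ℝ) (min 0 x) ≤ min 0 x := min_le_right _ _
  linarith

/-- Existence of a continuous lift of the angle of a continuous nonvanishing
function on the unit square. -/
lemma exists_lift_sq (G : ℝ × ℝ → ℂ) (hG : Continuous G)
    (hne : ∀ p : ℝ × ℝ, p.1 ∈ Set.Icc (0:ℝ) 1 → p.2 ∈ Set.Icc (0:ℝ) 1 → G p ≠ 0) :
    ∃ Ψ : ℝ × ℝ → ℝ, Continuous Ψ ∧ ∀ p : ℝ × ℝ, p.1 ∈ Set.Icc (0:ℝ) 1 →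
      p.2 ∈ Set.Icc (0:ℝ) 1 → LiftsOf (G p) (Ψ p) := by
  classical
  set K : Set (ℝ × ℝ) := (Set.Icc (0:ℝ) 1) ×ˢ (Set.Icc (0:ℝ) 1) with hK
  have hKc : IsCompact K := isCompact_Icc.prod isCompact_Icc
  have hKne : K.Nonempty := ⟨(0,0), by simp [hK]⟩
  -- clamped function
  set C : ℝ × ℝ → ℝ × ℝ := fun p => (clmp p.1, clmp p.2) with hC
  have hCK : ∀ p, C p ∈ K := fun p => ⟨clmp_mem _, clmp_mem _⟩
  have hCc : Continuous C := by
    unfold C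
    unfold clmp
    fun_prop
  set Gc : ℝ × ℝ → ℂ := fun p => G (C p) with hGc
  have hGcc : Continuous Gc := hG.comp hCc
  have hGne' : ∀ q ∈ K, G q ≠ 0 := fun q hq => hne q hq.1 hq.2
  -- minimum modulus
  obtain ⟨p₀, hp₀K, hp₀min⟩ := hKc.exists_isMinOn hKne
    ((continuous_norm.comp hG).continuousOn)
  set m : ℝ := ‖G p₀‖ with hm
  have hmpos : 0 < m := norm_pos_iff.2 (hGne' p₀ hp₀K)
  have hGcm : ∀ p, m ≤ ‖Gc p‖ := fun p => hp₀min (hCK p)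
  have hGcne : ∀ p, Gc p ≠ 0 := by
    intro p h
    rw [hGc] at h
    simp only at h
    have := hGcm p
    rw [show Gc p = G (C p) from rfl, h] at this
    simp at this
    linarith
  -- uniform continuity
  have hUC := hKc.uniformContinuousOn_of_continuous hG.continuousOn
  rw [Metric.uniformContinuousOn_iff] at hUC
  obtain ⟨δ, hδpos, hδ⟩ := hUC m hmpos
  -- clamped uniform bound
  have hCdist : ∀ p q : ℝ × ℝ, dist (C p) (C q) ≤ dist p q := by
    intro p q
    rw [Prod.dist_eq, Prod.dist_eq]
    apply max_le_max <;> rw [Real.dist_eq, Real.dist_eq] <;> exact clmp_lip _ _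
  have hGcUC : ∀ p q : ℝ × ℝ, dist p q < δ → ‖Gc p - Gc q‖ < m := by
    intro p q h
    rw [← Complex.dist_eq]
    exact hδ (C p) (hCK p) (C q) (hCK q) (lt_of_le_of_lt (hCdist p q) h)
  -- ratios have positive real part at small distance
  have hratio : ∀ p q : ℝ × ℝ, dist p q < δ → 0 < (Gc p / Gc q).re := by
    intro p q h
    apply re_div_pos (hGcne q)
    exact lt_of_lt_of_le (hGcUC p q h) (hGcm q)
  -- choose a fine grid
  obtain ⟨N', hN'⟩ := exists_nat_one_div_lt hδpos
  set N : ℕ := N' + 1 with hN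
  have hNpos : 0 < (N:ℝ) := by positivity
  have hNδ : 1 / (N:ℝ) < δ := by exact_mod_cast hN'
  set c : ℕ → ℝ := fun j => (j:ℝ) / N with hc
  have hcstep : ∀ j : ℕ, c (j+1) - c j = 1 / N := by
    intro j; rw [hc]; push_cast; field_simp; ring
  have hc0 : c 0 = 0 := by simp [hc]
  have hcN : c N = 1 := by rw [hc]; field_simp
  -- distances between consecutive grid points after min
  have hmindist : ∀ (j : ℕ) (x : ℝ), |min (c (j+1)) x - min (c j) x| < δ := by
    intro j x
    calc |min (c (j+1)) x - min (c j) x| ≤ max |c (j+1) - c j| |x - x| :=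
          abs_min_sub_min_le_max _ _ _ _
      _ = |c (j+1) - c j| := by simp
      _ = 1 / N := by rw [hcstep]; rw [abs_of_pos]; positivity
      _ < δ := hNδ
  -- increments
  set A : ℕ → ℝ → ℝ := fun j u => (Gc (min (c (j+1)) u, 0) / Gc (min (c j) u, 0)).arg with hA
  set B : ℕ → ℝ × ℝ → ℝ :=
    fun j p => (Gc (p.1, min (c (j+1)) p.2) / Gc (p.1, min (c j) p.2)).arg with hB
  have hdistA : ∀ (j : ℕ) (u : ℝ),
      dist ((min (c (j+1)) u, (0:ℝ)) : ℝ × ℝ) ((min (c j) u, 0) : ℝ × ℝ) < δ := by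
    intro j u
    rw [Prod.dist_eq]
    simp only [dist_self]
    rw [Real.dist_eq]
    rw [max_eq_left (abs_nonneg _)]
    exact hmindist j u
  have hdistB : ∀ (j : ℕ) (p : ℝ × ℝ),
      dist ((p.1, min (c (j+1)) p.2) : ℝ × ℝ) ((p.1, min (c j) p.2) : ℝ × ℝ) < δ := by
    intro j p
    rw [Prod.dist_eq]
    simp only [dist_self]
    rw [Real.dist_eq]
    rw [max_eq_right (abs_nonneg _)]
    exact hmindist j p.2
  -- positivity of real parts of the increments' arguments' vectors
  have hreA : ∀ (j : ℕ) (u : ℝ), 0 < (Gc (min (c (j+1)) u, 0) / Gc (min (c j) u, 0)).re :=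
    fun j u => hratio _ _ (hdistA j u)
  have hreB : ∀ (j : ℕ) (p : ℝ × ℝ),
      0 < (Gc (p.1, min (c (j+1)) p.2) / Gc (p.1, min (c j) p.2)).re :=
    fun j p => hratio _ _ (hdistB j p)
  -- continuity of the increments
  have hcontA : ∀ j : ℕ, Continuous (A j) := by
    intro j
    have hR : Continuous fun u => Gc (min (c (j+1)) u, 0) / Gc (min (c j) u, 0) :=
      Continuous.div (hGcc.comp (by fun_prop)) (hGcc.comp (by fun_prop)) (fun u => hGcne _)
    rw [continuous_iff_continuousAt]
    intro u
    have h1 : ContinuousAt Complex.arg (Gc (min (c (j+1)) u, 0) / Gc (min (c j) u, 0)) :=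
      Complex.continuousAt_arg (Complex.mem_slitPlane_iff.2 (Or.inl (hreA j u)))
    exact ContinuousAt.comp (g := Complex.arg)
      (f := fun u => Gc (min (c (j+1)) u, 0) / Gc (min (c j) u, 0)) h1 hR.continuousAt
  have hcontB : ∀ j : ℕ, Continuous (B j) := by
    intro j
    have hR : Continuous fun p : ℝ × ℝ =>
        Gc (p.1, min (c (j+1)) p.2) / Gc (p.1, min (c j) p.2) :=
      Continuous.div (hGcc.comp (by fun_prop)) (hGcc.comp (by fun_prop)) (fun p => hGcne _)
    rw [continuous_iff_continuousAt]
    intro p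
    have h1 : ContinuousAt Complex.arg (Gc (p.1, min (c (j+1)) p.2) / Gc (p.1, min (c j) p.2)) :=
      Complex.continuousAt_arg (Complex.mem_slitPlane_iff.2 (Or.inl (hreB j p)))
    exact ContinuousAt.comp (g := Complex.arg)
      (f := fun p : ℝ × ℝ => Gc (p.1, min (c (j+1)) p.2) / Gc (p.1, min (c j) p.2))
      h1 hR.continuousAt
  -- the lift
  set Ψ : ℝ × ℝ → ℝ := fun p =>
    ((Gc (0,0)).arg + (∑ j ∈ Finset.range N, A j p.1) + ∑ j ∈ Finset.range N, B j p) / (2*π)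
    with hΨ
  have hΨc : Continuous Ψ := by
    apply Continuous.div_const
    apply Continuous.add
    · apply Continuous.add continuous_const
      exact continuous_finset_sum _ (fun j _ => (hcontA j).comp continuous_fst)
    · exact continuous_finset_sum _ (fun j _ => hcontB j)
  have hGceq : ∀ a a' b b' : ℝ, clmp a = clmp a' → clmp b = clmp b' →
      Gc (a, b) = Gc (a', b') := by
    intro a a' b b' h1 h2
    show G (C (a,b)) = G (C (a',b'))
    have hCC : C (a,b) = C (a',b') := by
      show (clmp a, clmp b) = (clmp a', clmp b')
      rw [h1, h2]
    rw [hCC]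
  have hclmp0 : clmp 0 = 0 := clmp_eq_self ⟨le_refl 0, zero_le_one⟩
  -- horizontal telescoping
  have htelA : ∀ (x : ℝ) (n : ℕ),
      Complex.exp ((((Gc (0,0)).arg + ∑ j ∈ Finset.range n, A j x : ℝ) : ℂ) * Complex.I) =
        unitc (Gc (min (c n) x, 0)) := by
    intro x n
    induction n with
    | zero =>
      simp only [Finset.range_zero, Finset.sum_empty, add_zero]
      rw [exp_arg_eq_unitc (hGcne (0,0))]
      congr 1
      apply hGceq
      · rw [hc0, clmp_min_zero, hclmp0]
      · rfl
    | succ n ih =>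
      rw [Finset.sum_range_succ]
      rw [show ((((Gc (0,0)).arg + (∑ j ∈ Finset.range n, A j x + A n x) : ℝ)) : ℂ) * Complex.I
          = (((Gc (0,0)).arg + ∑ j ∈ Finset.range n, A j x : ℝ) : ℂ) * Complex.I
            + ((A n x : ℝ) : ℂ) * Complex.I by push_cast; ring]
      rw [Complex.exp_add, ih]
      rw [show A n x = (Gc (min (c (n+1)) x, 0) / Gc (min (c n) x, 0)).arg from rfl]
      rw [exp_arg_eq_unitc (div_ne_zero (hGcne _) (hGcne _))]
      exact unitc_mul_ratio (hGcne _) (hGcne _)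
  -- vertical telescoping
  have htelB : ∀ (p : ℝ × ℝ) (n : ℕ),
      Complex.exp ((((Gc (0,0)).arg + (∑ j ∈ Finset.range N, A j p.1)
          + ∑ j ∈ Finset.range n, B j p : ℝ) : ℂ) * Complex.I) =
        unitc (Gc (p.1, min (c n) p.2)) := by
    intro p n
    induction n with
    | zero =>
      simp only [Finset.range_zero, Finset.sum_empty, add_zero]
      rw [htelA p.1 N]
      congr 1
      apply hGceq
      · rw [hcN, clmp_min_one]
      · rw [hc0, clmp_min_zero, hclmp0]
    | succ n ih =>
      rw [Finset.sum_range_succ (f := fun j => B j p)]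
      rw [show ((((Gc (0,0)).arg + (∑ j ∈ Finset.range N, A j p.1)
            + (∑ j ∈ Finset.range n, B j p + B n p) : ℝ)) : ℂ) * Complex.I
          = (((Gc (0,0)).arg + (∑ j ∈ Finset.range N, A j p.1)
            + ∑ j ∈ Finset.range n, B j p : ℝ) : ℂ) * Complex.I
            + ((B n p : ℝ) : ℂ) * Complex.I by push_cast; ring]
      rw [Complex.exp_add, ih]
      rw [show B n p = (Gc (p.1, min (c (n+1)) p.2) / Gc (p.1, min (c n) p.2)).arg from rfl]
      rw [exp_arg_eq_unitc (div_ne_zero (hGcne _) (hGcne _))]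
      exact unitc_mul_ratio (hGcne _) (hGcne _)
  refine ⟨Ψ, hΨc, ?_⟩
  intro p hp1 hp2
  have hlift : LiftsOf (Gc p) (Ψ p) := by
    apply liftsOf_of_exp (hGcne p)
    have h2π : (2*π*Ψ p : ℝ) = (Gc (0,0)).arg + (∑ j ∈ Finset.range N, A j p.1)
        + ∑ j ∈ Finset.range N, B j p := by
      rw [hΨ]
      simp only
      field_simp
    rw [h2π]
    have hfin := htelB p N
    rw [hfin]
    congr 1
    apply hGceq
    · rfl
    · rw [hcN, clmp_min_one]
  have hGcp : Gc p = G p := by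
    show G (C p) = G p
    have hCp : C p = p := by
      show (clmp p.1, clmp p.2) = p
      rw [clmp_eq_self hp1, clmp_eq_self hp2]
    rw [hCp]
  rwa [hGcp] at hlift

/-! ### Complexification -/

def ιC : (ℝ × ℝ) →L[ℝ] ℂ := (Complex.equivRealProdCLM.symm : (ℝ × ℝ) ≃L[ℝ] ℂ)

lemma ιC_apply (v : ℝ × ℝ) : ιC v = (v.1 : ℂ) + (v.2 : ℂ) * Complex.I :=
  Complex.equivRealProdCLM_symm_apply v

lemma ιC_re (v : ℝ × ℝ) : (ιC v).re = v.1 := by rw [ιC_apply]; simp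

lemma ιC_im (v : ℝ × ℝ) : (ιC v).im = v.2 := by rw [ιC_apply]; simp

lemma ιC_inj {v w : ℝ × ℝ} (h : ιC v = ιC w) : v = w := by
  have := Complex.equivRealProdCLM.symm.injective h
  exact this

lemma ιC_ne {v : ℝ × ℝ} (hv : v ≠ 0) : ιC v ≠ 0 := by
  intro h
  exact hv (ιC_inj (h.trans (map_zero ιC).symm))

/-! ### tangent vector and secant function -/

def VV (c : EssC1Curve) : ℝ → ℂ := fun t => ιC (deriv c.Γ t)

def gsec (c : EssC1Curve) : ℝ × ℝ → ℂ :=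
  fun p => ∫ u in (0:ℝ)..1, ιC (deriv c.Γ (p.1 + u * (p.2 - p.1)))

def hh (c : EssC1Curve) : ℝ → ℝ := fun t => (c.Γ t).2

def sg (z : ℂ) : ℝ := if 0 < z.re then 1/2 else 0

lemma sg_cases (z : ℂ) : sg z = 0 ∨ sg z = 1/2 := by unfold sg; split <;> simp

lemma sig_eq_sg {V : ℂ} {x : ℝ} (hV : V ≠ 0) (h : LiftsOf V x) (him : V.im = 0) :
    sig x = sg V := by
  have habs : 0 < ‖V‖ := norm_pos_iff.2 hV
  have hiff : (0 < V.re) ↔ (0 < Real.cos (2*π*x)) := by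
    rw [liftsOf_re h]; exact mul_pos_iff_of_pos_left habs
  unfold sig sg
  by_cases hc : 0 < Real.cos (2*π*x)
  · rw [if_pos hc, if_pos (hiff.2 hc)]
  · rw [if_neg hc, if_neg (fun hx => hc (hiff.1 hx))]

section curve

variable (c : EssC1Curve)

lemma hVcont : Continuous (VV c) :=
  ιC.continuous.comp (c.smooth.continuous_deriv le_rfl)

lemma hVne (t : ℝ) : VV c t ≠ 0 := ιC_ne (c.tangent_ne t)

lemma hΓdiff (t : ℝ) : HasDerivAt c.Γ (deriv c.Γ t) t :=
  ((c.smooth.differentiable one_ne_zero) t).hasDerivAt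

lemma hιΓderiv (t : ℝ) : HasDerivAt (fun t => ιC (c.Γ t)) (VV c t) t :=
  (ιC.hasFDerivAt).comp_hasDerivAt t (hΓdiff c t)

lemma dΓper (t : ℝ) : deriv c.Γ (t + 1) = deriv c.Γ t := by
  have h1 : deriv (fun x => c.Γ (x + 1)) t = deriv c.Γ (t + 1) :=
    deriv_comp_add_const c.Γ 1 t
  have h2 : (fun x => c.Γ (x + 1)) = fun x => c.Γ x + (c.e, 0) := funext fun x => c.per x
  rw [h2] at h1
  rw [← h1, deriv_add_const]

lemma VVper (t : ℝ) : VV c (t + 1) = VV c t := by unfold VV; rw [dΓper]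

lemma hhcont : Continuous (hh c) := continuous_snd.comp (c.smooth.continuous)

lemma hhper (t : ℝ) : hh c (t + 1) = hh c t := by
  unfold hh
  rw [c.per]
  simp

lemma hhderiv (t : ℝ) : HasDerivAt (hh c) ((deriv c.Γ t).2) t :=
  ((ContinuousLinearMap.snd ℝ ℝ ℝ).hasFDerivAt).comp_hasDerivAt t (hΓdiff c t)

lemma im_VV_of_max {a : ℝ} (hmax : ∀ t, hh c t ≤ hh c a) : (VV c a).im = 0 := by
  have h1 : IsLocalMax (hh c) a := Filter.Eventually.of_forall (fun t => hmax t)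
  have h2 : deriv (hh c) a = 0 := h1.deriv_eq_zero
  rw [(hhderiv c a).deriv] at h2
  rw [show (VV c a).im = (deriv c.Γ a).2 from ιC_im _, h2]

lemma im_VV_of_min {a : ℝ} (hmin : ∀ t, hh c a ≤ hh c t) : (VV c a).im = 0 := by
  have h1 : IsLocalMin (hh c) a := Filter.Eventually.of_forall (fun t => hmin t)
  have h2 : deriv (hh c) a = 0 := h1.deriv_eq_zero
  rw [(hhderiv c a).deriv] at h2
  rw [show (VV c a).im = (deriv c.Γ a).2 from ιC_im _, h2]

lemma gcont : Continuous (gsec c) := by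
  have hd : Continuous (deriv c.Γ) := c.smooth.continuous_deriv le_rfl
  apply intervalIntegral.continuous_parametric_intervalIntegral_of_continuous'
  exact ιC.continuous.comp (hd.comp (by fun_prop))

lemma gdiag (t : ℝ) : gsec c (t, t) = VV c t := by
  unfold gsec
  simp only [sub_self, mul_zero, add_zero]
  rw [intervalIntegral.integral_const]
  simp [VV]

lemma gsub (s t : ℝ) :
    ((t - s : ℝ) : ℂ) * gsec c (s, t) = ιC (c.Γ t) - ιC (c.Γ s) := by
  have hFd : ∀ u : ℝ, HasDerivAt (fun u => ιC (c.Γ (s + u * (t - s))))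
      ((t - s) • VV c (s + u * (t - s))) u := by
    intro u
    have h1 : HasDerivAt (fun u : ℝ => s + u * (t - s)) (t - s) u := by
      simpa using ((hasDerivAt_id u).mul_const (t - s)).const_add s
    exact (hιΓderiv c (s + u * (t - s))).scomp u h1
  have hInt : IntervalIntegrable (fun u => (t - s) • VV c (s + u * (t - s))) MeasureTheory.volume 0 1 := by
    apply Continuous.intervalIntegrable
    exact (Continuous.smul (f := fun _ : ℝ => t - s) continuous_const ((hVcont c).comp (f := fun u : ℝ => s + u * (t - s)) (by fun_prop)))
  have := intervalIntegral.integral_eq_sub_of_hasDerivAt (fun u _ => hFd u) hInt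
  rw [show s + 1 * (t - s) = t by ring, show s + 0 * (t - s) = s by ring] at this
  have hgs : gsec c (s,t) = ∫ u in (0:ℝ)..1, ιC (deriv c.Γ (s + u * (t - s))) := rfl
  rw [hgs, ← Complex.real_smul, ← intervalIntegral.integral_smul]
  exact this

end curve

section curve2
variable (c : EssC1Curve)

lemma gne {s t : ℝ} (hst : s ≤ t) (hts : t ≤ s + 1) : gsec c (s, t) ≠ 0 := by
  rcases eq_or_lt_of_le hst with rfl | hlt
  · rw [gdiag]; exact hVne c s
  · intro h0
    have h1 := gsub c s t
    rw [h0, mul_zero] at h1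
    have h2 : ιC (c.Γ t) = ιC (c.Γ s) := by
      have := h1.symm
      rwa [sub_eq_zero] at this
    have h3 : c.Γ s = c.Γ t := (ιC_inj h2).symm
    obtain ⟨k, hk⟩ := c.inj s t h3
    have hk1 : k = 1 := by
      have h4 : (0:ℝ) < (k:ℝ) := by rw [hk] at hlt; linarith
      have h5 : (k:ℝ) ≤ 1 := by rw [hk] at hts; linarith
      have h6 : (0:ℤ) < k := by exact_mod_cast h4
      have h7 : k ≤ 1 := by exact_mod_cast h5
      omega
    rw [hk1] at hk
    push_cast at hk
    have h8 : c.Γ (s + 1) = c.Γ s + (c.e, 0) := c.per s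
    rw [← hk, ← h3] at h8
    have h9 : (c.e, (0:ℝ)) = (0 : ℝ × ℝ) := by
      have h10 := h8
      nth_rewrite 1 [show c.Γ s = c.Γ s + 0 by rw [add_zero]] at h10
      exact (add_left_cancel h10).symm
    have h11 : c.e = 0 := congrArg Prod.fst h9
    rcases c.he with he1 | he1 <;> rw [he1] at h11 <;> norm_num at h11

lemma gim {s t : ℝ} (hst : s < t) : (gsec c (s, t)).im * (t - s) = hh c t - hh c s := by
  have h1 := gsub c s t
  have h2 : (((t - s : ℝ) : ℂ) * gsec c (s, t)).im = (t - s) * (gsec c (s,t)).im := by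
    simp [Complex.mul_im]
  rw [h1] at h2
  rw [Complex.sub_im, ιC_im, ιC_im] at h2
  unfold hh
  linarith [h2]

lemma ge_horiz (t : ℝ) : gsec c (t, t + 1) = (c.e : ℂ) := by
  have h1 := gsub c t (t + 1)
  rw [show (t + 1 - t : ℝ) = 1 by ring] at h1
  push_cast at h1
  rw [one_mul] at h1
  rw [h1, c.per]
  rw [ιC_apply, ιC_apply]
  have : (c.Γ t + (c.e, 0)).1 = (c.Γ t).1 + c.e := rfl
  rw [this]
  have : (c.Γ t + (c.e, 0)).2 = (c.Γ t).2 + 0 := rfl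
  rw [this]
  push_cast
  ring

end curve2

section keyM
variable (c : EssC1Curve)

/-- Master lemma: the variation of a tangent-angle determination between `a` and `b`
decomposes as the variation along the vertical secant leg and horizontal secant leg. -/
lemma keyM {a b : ℝ} (hab : a < b) (hb1 : b ≤ a + 1) {ψ : ℝ → ℝ} (hψc : Continuous ψ)
    (hψ : ∀ t, LiftsOf (VV c t) (ψ t)) :
    ∃ α β : ℝ → ℝ, Continuous α ∧ Continuous β ∧
      (∀ w ∈ Set.Icc (0:ℝ) 1, LiftsOf (gsec c (a, a + (b-a)*w)) (α w)) ∧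
      (∀ u ∈ Set.Icc (0:ℝ) 1, LiftsOf (gsec c (a + (b-a)*u, b)) (β u)) ∧
      ψ b - ψ a = (α 1 - α 0) + (β 1 - β 0) := by
  have hd0 : (0:ℝ) < b - a := by linarith
  have hd1 : b - a ≤ 1 := by linarith
  set G : ℝ × ℝ → ℂ := fun p => gsec c (a + (b-a) * min p.1 p.2, a + (b-a) * p.2) with hG
  have hGc : Continuous G := (gcont c).comp (by fun_prop)
  have hGne : ∀ p : ℝ × ℝ, p.1 ∈ Set.Icc (0:ℝ) 1 → p.2 ∈ Set.Icc (0:ℝ) 1 → G p ≠ 0 := by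
    intro p hp1 hp2
    apply gne
    · have : min p.1 p.2 ≤ p.2 := min_le_right _ _
      nlinarith
    · have h1 : 0 ≤ min p.1 p.2 := le_min hp1.1 hp2.1
      have h2 : p.2 - min p.1 p.2 ≤ 1 := by
        have := hp2.2; linarith
      nlinarith
  obtain ⟨Ψ, hΨc, hΨ⟩ := exists_lift_sq G hGc hGne
  set α : ℝ → ℝ := fun w => Ψ (0, w) with hα
  set β : ℝ → ℝ := fun u => Ψ (u, 1) with hβ
  have hαc : Continuous α := hΨc.comp (by fun_prop)
  have hβc : Continuous β := hΨc.comp (by fun_prop)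
  have h01 : (0:ℝ) ∈ Set.Icc (0:ℝ) 1 := by norm_num
  have h11 : (1:ℝ) ∈ Set.Icc (0:ℝ) 1 := by norm_num
  -- α is a lift of the vertical leg
  have hliftα : ∀ w ∈ Set.Icc (0:ℝ) 1, LiftsOf (gsec c (a, a + (b-a)*w)) (α w) := by
    intro w hw
    have := hΨ (0, w) h01 hw
    have hGeq : G (0, w) = gsec c (a, a + (b-a)*w) := by
      rw [hG]
      simp only
      rw [min_eq_left hw.1, mul_zero, add_zero]
    rwa [hGeq] at this
  -- β is a lift of the horizontal leg
  have hliftβ : ∀ u ∈ Set.Icc (0:ℝ) 1, LiftsOf (gsec c (a + (b-a)*u, b)) (β u) := by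
    intro u hu
    have := hΨ (u, 1) hu h11
    have hGeq : G (u, 1) = gsec c (a + (b-a)*u, b) := by
      rw [hG]
      simp only
      rw [min_eq_left hu.2, mul_one]
      congr 2
      ring
    rwa [hGeq] at this
  -- the diagonal of the square is the tangent path
  have hdiag : ∀ w ∈ Set.Icc (0:ℝ) 1, LiftsOf (VV c (a + (b-a)*w)) (Ψ (1, w)) := by
    intro w hw
    have := hΨ (1, w) h11 hw
    have hGeq : G (1, w) = VV c (a + (b-a)*w) := by
      rw [hG]
      simp only
      rw [min_eq_right hw.2]
      exact gdiag c _
    rwa [hGeq] at this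
  -- ψ(b) - ψ(a) equals the variation of the diagonal lift
  have hdiagvar : ψ b - ψ a = Ψ (1, 1) - Ψ (1, 0) := by
    set f : ℝ → ℝ := fun w => Ψ (1, w) - ψ (a + (b-a)*w) with hf
    have hfc : Continuous f := (hΨc.comp (by fun_prop)).sub (hψc.comp (by fun_prop))
    have hfint : ∀ w ∈ Set.Icc (0:ℝ) 1, ∃ k : ℤ, f w = k := by
      intro w hw
      obtain ⟨k, hk⟩ := liftsOf_sub_int (hVne c (a + (b-a)*w)) (hψ (a + (b-a)*w)) (hdiag w hw)
      exact ⟨k, hk⟩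
    have := intval_const hfc zero_le_one hfint
    have h10 : a + (b-a)*1 = b := by ring
    have h00 : a + (b-a)*0 = a := by ring
    rw [hf] at this
    simp only at this
    rw [h10, h00] at this
    linarith
  -- the bottom edge is constant
  have hbot : Ψ (1, 0) = Ψ (0, 0) := by
    have hlbot : ∀ u ∈ Set.Icc (0:ℝ) 1, LiftsOf (VV c a) (Ψ (u, 0)) := by
      intro u hu
      have := hΨ (u, 0) hu h01
      have hGeq : G (u, 0) = VV c a := by
        rw [hG]
        simp only
        rw [min_eq_right hu.1, mul_zero, add_zero]
        exact gdiag c a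
      rwa [hGeq] at this
    set f : ℝ → ℝ := fun u => Ψ (u, 0) - Ψ (0, 0) with hf
    have hfc : Continuous f := (hΨc.comp (by fun_prop)).sub continuous_const
    have hfint : ∀ u ∈ Set.Icc (0:ℝ) 1, ∃ k : ℤ, f u = k := by
      intro u hu
      obtain ⟨k, hk⟩ := liftsOf_sub_int (hVne c a) (hlbot 0 h01) (hlbot u hu)
      exact ⟨k, hk⟩
    have := intval_const hfc zero_le_one hfint
    rw [hf] at this
    simp only at this
    linarith
  refine ⟨α, β, hαc, hβc, hliftα, hliftβ, ?_⟩
  have hcorner : α 1 = β 0 := rfl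
  have hα0 : α 0 = Ψ (0, 0) := rfl
  have hβ1 : β 1 = Ψ (1, 1) := rfl
  rw [hdiagvar, hbot, hα0, hβ1, ← hcorner]
  ring

end keyM

lemma sin_nonpos_of_lift {V : ℂ} {x : ℝ} (hV : V ≠ 0) (h : LiftsOf V x) (him : V.im ≤ 0) :
    Real.sin (2*π*x) ≤ 0 := by
  have habs : 0 < ‖V‖ := norm_pos_iff.2 hV
  have h1 := liftsOf_im h
  nlinarith

lemma sin_nonneg_of_lift {V : ℂ} {x : ℝ} (hV : V ≠ 0) (h : LiftsOf V x) (him : 0 ≤ V.im) :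
    0 ≤ Real.sin (2*π*x) := by
  have habs : 0 < ‖V‖ := norm_pos_iff.2 hV
  have h1 := liftsOf_im h
  nlinarith

lemma sin_zero_of_lift {V : ℂ} {x : ℝ} (hV : V ≠ 0) (h : LiftsOf V x) (him : V.im = 0) :
    Real.sin (2*π*x) = 0 := by
  have habs : 0 < ‖V‖ := norm_pos_iff.2 hV
  have h1 := liftsOf_im h
  rw [him] at h1
  have := h1.symm
  rcases mul_eq_zero.1 this with h2 | h2
  · exact absurd h2 habs.ne'
  · exact h2

section maxmax
variable (c : EssC1Curve)

lemma maxmax {a b : ℝ} (hab : a < b) (hb1 : b ≤ a + 1)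
    (hmaxa : ∀ t, hh c t ≤ hh c a) (hba : hh c b = hh c a)
    {ψ : ℝ → ℝ} (hψc : Continuous ψ) (hψ : ∀ t, LiftsOf (VV c t) (ψ t)) :
    ψ b - ψ a = 2 * sg (gsec c (a, b)) - sg (VV c a) - sg (VV c b) := by
  obtain ⟨α, β, hαc, hβc, hlα, hlβ, hsum⟩ := keyM c hab hb1 hψc hψ
  have hmaxb : ∀ t, hh c t ≤ hh c b := fun t => by rw [hba]; exact hmaxa t
  have hd0 : (0:ℝ) < b - a := by linarith
  have hd1 : b - a ≤ 1 := by linarith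
  have h01 : (0:ℝ) ∈ Set.Icc (0:ℝ) 1 := by norm_num
  have h11 : (1:ℝ) ∈ Set.Icc (0:ℝ) 1 := by norm_num
  have ha1 : a + (b-a)*1 = b := by ring
  have ha0 : a + (b-a)*0 = a := by ring
  -- vertical leg nonzero
  have hzneα : ∀ w ∈ Set.Icc (0:ℝ) 1, gsec c (a, a+(b-a)*w) ≠ 0 := by
    intro w hw
    apply gne
    · nlinarith [hw.1]
    · nlinarith [hw.2]
  have hzimα : ∀ w ∈ Set.Icc (0:ℝ) 1, (gsec c (a, a+(b-a)*w)).im ≤ 0 := by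
    intro w hw
    rcases eq_or_lt_of_le hw.1 with heq | hpos
    · rw [← heq, ha0, gdiag]
      exact (im_VV_of_max c hmaxa).le
    · have hlt : a < a + (b-a)*w := by nlinarith
      have h1 := gim c hlt
      have h2 : hh c (a + (b-a)*w) - hh c a ≤ 0 := by linarith [hmaxa (a + (b-a)*w)]
      nlinarith
  have hzimα1 : (gsec c (a, a+(b-a)*1)).im = 0 := by
    have hlt : a < a + (b-a)*1 := by nlinarith
    have h1 := gim c hlt
    rw [ha1] at h1 ⊢
    have h2 : hh c b - hh c a = 0 := by rw [hba]; ring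
    rw [h2] at h1
    have h3 : (0:ℝ) < b - a := hd0
    rcases mul_eq_zero.1 h1 with h4 | h4
    · exact h4
    · linarith
  have hzimα0 : (gsec c (a, a+(b-a)*0)).im = 0 := by
    rw [ha0, gdiag]
    exact im_VV_of_max c hmaxa
  -- trap for α
  have hΔα : α 1 - α 0 = sig (α 1) - sig (α 0) := by
    apply trap_lower hαc
    · intro w hw
      exact sin_nonpos_of_lift (hzneα w hw) (hlα w hw) (hzimα w hw)
    · exact sin_zero_of_lift (hzneα 0 h01) (hlα 0 h01) hzimα0
    · exact sin_zero_of_lift (hzneα 1 h11) (hlα 1 h11) hzimα1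
  -- horizontal leg nonzero
  have hzneβ : ∀ u ∈ Set.Icc (0:ℝ) 1, gsec c (a+(b-a)*u, b) ≠ 0 := by
    intro u hu
    apply gne
    · nlinarith [hu.2]
    · nlinarith [hu.1]
  have hzimβ : ∀ u ∈ Set.Icc (0:ℝ) 1, 0 ≤ (gsec c (a+(b-a)*u, b)).im := by
    intro u hu
    rcases eq_or_lt_of_le hu.2 with heq | hlt1
    · rw [heq, ha1, gdiag]
      exact (im_VV_of_max c hmaxb).ge
    · have hlt : a + (b-a)*u < b := by nlinarith
      have h1 := gim c hlt
      have h2 : 0 ≤ hh c b - hh c (a + (b-a)*u) := by linarith [hmaxb (a + (b-a)*u)]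
      nlinarith
  have hzimβ0 : (gsec c (a+(b-a)*0, b)).im = 0 := by
    rw [ha0]
    have hlt : a < b := hab
    have h1 := gim c hlt
    have h2 : hh c b - hh c a = 0 := by rw [hba]; ring
    rw [h2] at h1
    rcases mul_eq_zero.1 h1 with h4 | h4
    · exact h4
    · linarith
  have hzimβ1 : (gsec c (a+(b-a)*1, b)).im = 0 := by
    rw [ha1, gdiag]
    exact im_VV_of_max c hmaxb
  have hΔβ : β 1 - β 0 = sig (β 0) - sig (β 1) := by
    apply trap_upper hβc
    · intro u hu
      exact sin_nonneg_of_lift (hzneβ u hu) (hlβ u hu) (hzimβ u hu)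
    · exact sin_zero_of_lift (hzneβ 0 h01) (hlβ 0 h01) hzimβ0
    · exact sin_zero_of_lift (hzneβ 1 h11) (hlβ 1 h11) hzimβ1
  -- translate sig values to sg values
  have hsigα1 : sig (α 1) = sg (gsec c (a, b)) := by
    have := sig_eq_sg (hzneα 1 h11) (hlα 1 h11) hzimα1
    rwa [ha1] at this
  have hsigα0 : sig (α 0) = sg (VV c a) := by
    have := sig_eq_sg (hzneα 0 h01) (hlα 0 h01) hzimα0
    rw [ha0, gdiag] at this
    exact this
  have hsigβ0 : sig (β 0) = sg (gsec c (a, b)) := by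
    have := sig_eq_sg (hzneβ 0 h01) (hlβ 0 h01) hzimβ0
    rwa [ha0] at this
  have hsigβ1 : sig (β 1) = sg (VV c b) := by
    have := sig_eq_sg (hzneβ 1 h11) (hlβ 1 h11) hzimβ1
    rw [ha1, gdiag] at this
    exact this
  rw [hsum, hΔα, hΔβ, hsigα1, hsigα0, hsigβ0, hsigβ1]
  ring

lemma minmin {a : ℝ} (hmina : ∀ t, hh c a ≤ hh c t)
    {ψ : ℝ → ℝ} (hψc : Continuous ψ) (hψ : ∀ t, LiftsOf (VV c t) (ψ t)) :
    ψ (a+1) - ψ a = 2 * sg (VV c a) - 2 * sg (gsec c (a, a+1)) := by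
  have hab : a < a + 1 := by linarith
  obtain ⟨α, β, hαc, hβc, hlα, hlβ, hsum⟩ := keyM c hab (le_refl (a+1)) hψc hψ
  have hminb : ∀ t, hh c (a+1) ≤ hh c t := fun t => by rw [hhper c a]; exact hmina t
  have h01 : (0:ℝ) ∈ Set.Icc (0:ℝ) 1 := by norm_num
  have h11 : (1:ℝ) ∈ Set.Icc (0:ℝ) 1 := by norm_num
  have ha1 : a + (a+1-a)*1 = a + 1 := by ring
  have ha0 : a + (a+1-a)*0 = a := by ring
  have hVa1 : VV c (a+1) = VV c a := VVper c a
  have hzneα : ∀ w ∈ Set.Icc (0:ℝ) 1, gsec c (a, a+(a+1-a)*w) ≠ 0 := by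
    intro w hw
    apply gne
    · nlinarith [hw.1]
    · nlinarith [hw.2]
  have hzimα : ∀ w ∈ Set.Icc (0:ℝ) 1, 0 ≤ (gsec c (a, a+(a+1-a)*w)).im := by
    intro w hw
    rcases eq_or_lt_of_le hw.1 with heq | hpos
    · rw [← heq, ha0, gdiag]
      exact (im_VV_of_min c hmina).ge
    · have hlt : a < a + (a+1-a)*w := by nlinarith
      have h1 := gim c hlt
      have h2 : 0 ≤ hh c (a + (a+1-a)*w) - hh c a := by linarith [hmina (a + (a+1-a)*w)]
      nlinarith
  have hzimα1 : (gsec c (a, a+(a+1-a)*1)).im = 0 := by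
    have hlt : a < a + (a+1-a)*1 := by nlinarith
    have h1 := gim c hlt
    rw [ha1] at h1 ⊢
    have h2 : hh c (a+1) - hh c a = 0 := by rw [hhper c a]; ring
    rw [h2] at h1
    rcases mul_eq_zero.1 h1 with h4 | h4
    · exact h4
    · linarith
  have hzimα0 : (gsec c (a, a+(a+1-a)*0)).im = 0 := by
    rw [ha0, gdiag]
    exact im_VV_of_min c hmina
  have hΔα : α 1 - α 0 = sig (α 0) - sig (α 1) := by
    apply trap_upper hαc
    · intro w hw
      exact sin_nonneg_of_lift (hzneα w hw) (hlα w hw) (hzimα w hw)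
    · exact sin_zero_of_lift (hzneα 0 h01) (hlα 0 h01) hzimα0
    · exact sin_zero_of_lift (hzneα 1 h11) (hlα 1 h11) hzimα1
  have hzneβ : ∀ u ∈ Set.Icc (0:ℝ) 1, gsec c (a+(a+1-a)*u, a+1) ≠ 0 := by
    intro u hu
    apply gne
    · nlinarith [hu.2]
    · nlinarith [hu.1]
  have hzimβ : ∀ u ∈ Set.Icc (0:ℝ) 1, (gsec c (a+(a+1-a)*u, a+1)).im ≤ 0 := by
    intro u hu
    rcases eq_or_lt_of_le hu.2 with heq | hlt1
    · rw [heq, ha1, gdiag]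
      exact (im_VV_of_min c hminb).le
    · have hlt : a + (a+1-a)*u < a+1 := by nlinarith
      have h1 := gim c hlt
      have h2 : hh c (a+1) - hh c (a + (a+1-a)*u) ≤ 0 := by
        linarith [hminb (a + (a+1-a)*u)]
      nlinarith
  have hzimβ0 : (gsec c (a+(a+1-a)*0, a+1)).im = 0 := by
    rw [ha0]
    have h1 := gim c hab
    have h2 : hh c (a+1) - hh c a = 0 := by rw [hhper c a]; ring
    rw [h2] at h1
    rcases mul_eq_zero.1 h1 with h4 | h4
    · exact h4
    · linarith
  have hzimβ1 : (gsec c (a+(a+1-a)*1, a+1)).im = 0 := by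
    rw [ha1, gdiag]
    exact im_VV_of_min c hminb
  have hΔβ : β 1 - β 0 = sig (β 1) - sig (β 0) := by
    apply trap_lower hβc
    · intro u hu
      exact sin_nonpos_of_lift (hzneβ u hu) (hlβ u hu) (hzimβ u hu)
    · exact sin_zero_of_lift (hzneβ 0 h01) (hlβ 0 h01) hzimβ0
    · exact sin_zero_of_lift (hzneβ 1 h11) (hlβ 1 h11) hzimβ1
  have hsigα1 : sig (α 1) = sg (gsec c (a, a+1)) := by
    have := sig_eq_sg (hzneα 1 h11) (hlα 1 h11) hzimα1
    rwa [ha1] at this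
  have hsigα0 : sig (α 0) = sg (VV c a) := by
    have := sig_eq_sg (hzneα 0 h01) (hlα 0 h01) hzimα0
    rw [ha0, gdiag] at this
    exact this
  have hsigβ0 : sig (β 0) = sg (gsec c (a, a+1)) := by
    have := sig_eq_sg (hzneβ 0 h01) (hlβ 0 h01) hzimβ0
    rwa [ha0] at this
  have hsigβ1 : sig (β 1) = sg (VV c a) := by
    have := sig_eq_sg (hzneβ 1 h11) (hlβ 1 h11) hzimβ1
    rw [ha1, gdiag, hVa1] at this
    exact this
  rw [hsum, hΔα, hΔβ, hsigα1, hsigα0, hsigβ0, hsigβ1]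
  ring

end maxmax

lemma ιC_angVec (x : ℝ) :
    ιC (angVec x) = Complex.exp (((2*π*(x + 1/4) : ℝ):ℂ) * Complex.I) := by
  apply Complex.ext
  · rw [ιC_re]
    rw [Complex.exp_ofReal_mul_I_re]
    rw [show 2*π*(x+1/4) = 2*π*x + π/2 by ring, Real.cos_add_pi_div_two]
    rfl
  · rw [ιC_im]
    rw [Complex.exp_ofReal_mul_I_im]
    rw [show 2*π*(x+1/4) = 2*π*x + π/2 by ring, Real.sin_add_pi_div_two]
    rfl

lemma lift_of_angleDet (c : EssC1Curve) {θ : ℝ → ℝ}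
    (hθ : IsAngleDet (fun t => deriv c.Γ t) θ) (t : ℝ) :
    LiftsOf (VV c t) (θ t + 1/4) := by
  obtain ⟨r, hr, heq⟩ := hθ.2 t
  have heq' : deriv c.Γ t = r • angVec (θ t) := heq
  have h1 : VV c t = (r:ℂ) * Complex.exp (((2*π*(θ t + 1/4) : ℝ):ℂ) * Complex.I) := by
    unfold VV
    rw [heq', map_smul, Complex.real_smul, ιC_angVec]
  have h2 : ‖VV c t‖ = r := by
    rw [h1, norm_mul, Complex.norm_real, Real.norm_eq_abs, Complex.norm_exp_ofReal_mul_I, mul_one,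
      abs_of_pos hr]
  unfold LiftsOf
  rw [h2]
  exact h1

set_option maxHeartbeats 2000000 in
/-- if two distinct parameters `S₀`, `S₁` (with `S₁` a lift in
`(S₀, S₀+1)`) both achieve the maximal height of a `C¹` essential curve, then
the angle variation of the tangent vector along the curve between them is
zero: `Var_γ(γ(s₀), γ(s₁)) = θ S₁ − θ S₀ = 0` for any continuous determination
`θ` of the tangent angle. -/
theorem stmt5 (c : EssC1Curve) (S₀ S₁ : ℝ) (hS : S₁ ∈ Set.Ioo S₀ (S₀ + 1))
    (hmax₀ : ∀ t, (c.Γ t).2 ≤ (c.Γ S₀).2) (hmax₁ : (c.Γ S₁).2 = (c.Γ S₀).2)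
    (θ : ℝ → ℝ) (hθ : IsAngleDet (fun t => deriv c.Γ t) θ) :
    θ S₁ - θ S₀ = 0 := by
  -- switch to the normalized lift ψ = θ + 1/4
  set ψ : ℝ → ℝ := fun t => θ t + 1/4 with hψdef
  have hψc : Continuous ψ := hθ.1.add continuous_const
  have hψ : ∀ t, LiftsOf (VV c t) (ψ t) := fun t => lift_of_angleDet c hθ t
  have hψθ : ∀ t, ψ t = θ t + 1/4 := fun t => rfl
  clear_value ψ
  -- height function facts
  have hmax₀' : ∀ t, hh c t ≤ hh c S₀ := hmax₀
  have hmax₁' : hh c S₁ = hh c S₀ := hmax₁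
  have hmaxS₁ : ∀ t, hh c t ≤ hh c S₁ := fun t => by rw [hmax₁']; exact hmax₀' t
  -- a global minimum of the height
  obtain ⟨ν, hν, hνm⟩ := isCompact_Icc.exists_isMinOn
    (Set.nonempty_Icc.2 (zero_le_one)) ((hhcont c).continuousOn (s := Set.Icc (0:ℝ) 1))
  have hper : Function.Periodic (hh c) 1 := hhper c
  have hmin : ∀ t, hh c ν ≤ hh c t := by
    intro t
    have h2 : hh c (t - (⌊t⌋ : ℝ) * 1) = hh c t := hper.sub_int_mul_eq ⌊t⌋
    rw [mul_one] at h2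
    have h3 : t - (⌊t⌋ : ℝ) ∈ Set.Icc (0:ℝ) 1 := by
      constructor
      · linarith [Int.floor_le t]
      · linarith [Int.lt_floor_add_one t]
    calc hh c ν ≤ hh c (t - (⌊t⌋:ℝ)) := hνm h3
      _ = hh c t := h2
  -- winding increment is independent of base point
  set P : ℝ → ℝ := fun t => ψ (t+1) - ψ t with hP
  have hPc : Continuous P := (hψc.comp (by fun_prop)).sub hψc
  have hPint : ∀ t, ∃ k : ℤ, P t = k := by
    intro t
    have h1 := hψ (t+1)
    rw [VVper c t] at h1
    exact liftsOf_sub_int (hVne c t) (hψ t) h1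
  have hPconst : ∀ s t : ℝ, P s = P t := by
    intro s t
    rcases le_total s t with h | h
    · exact intval_const hPc h (fun u _ => hPint u)
    · exact (intval_const hPc h (fun u _ => hPint u)).symm
  -- the five equations
  have e1 : ψ (S₀+1) - ψ S₀ = 2 * sg ((c.e:ℂ)) - 2 * sg (VV c S₀) := by
    have h := maxmax c (lt_add_one S₀) (le_refl (S₀+1)) hmax₀' (hhper c S₀) hψc hψ
    rw [ge_horiz c S₀, VVper c S₀] at h
    linarith
  have e2 : ψ (S₁+1) - ψ S₁ = 2 * sg ((c.e:ℂ)) - 2 * sg (VV c S₁) := by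
    have h := maxmax c (lt_add_one S₁) (le_refl (S₁+1)) hmaxS₁ (hhper c S₁) hψc hψ
    rw [ge_horiz c S₁, VVper c S₁] at h
    linarith
  have e3 : ψ (ν+1) - ψ ν = 2 * sg (VV c ν) - 2 * sg ((c.e:ℂ)) := by
    have h := minmin c hmin hψc hψ
    rw [ge_horiz c ν] at h
    linarith
  have e4 : ψ S₁ - ψ S₀ = 2 * sg (gsec c (S₀, S₁)) - sg (VV c S₀) - sg (VV c S₁) :=
    maxmax c hS.1 hS.2.le hmax₀' hmax₁' hψc hψ
  have e5 : ψ (S₀+1) - ψ S₁ =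
      2 * sg (gsec c (S₁, S₀+1)) - sg (VV c S₁) - sg (VV c S₀) := by
    have hba : hh c (S₀+1) = hh c S₁ := by rw [hhper c S₀, hmax₁']
    have h := maxmax c hS.2 (by linarith [hS.1]) hmaxS₁ hba hψc hψ
    rw [VVper c S₀] at h
    linarith
  -- the winding increments agree
  have p1 : ψ (S₀+1) - ψ S₀ = ψ (ν+1) - ψ ν := hPconst S₀ ν
  have p2 : ψ (S₁+1) - ψ S₁ = ψ (ν+1) - ψ ν := hPconst S₁ ν
  -- final case analysis
  have goal' : ψ S₁ - ψ S₀ = 0 := by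
    rcases sg_cases ((c.e:ℂ)) with hE | hE <;>
    rcases sg_cases (VV c S₀) with h0 | h0 <;>
    rcases sg_cases (VV c S₁) with h1 | h1 <;>
    rcases sg_cases (VV c ν) with hν' | hν' <;>
    rcases sg_cases (gsec c (S₀, S₁)) with hy | hy <;>
    rcases sg_cases (gsec c (S₁, S₀+1)) with hy' | hy' <;>
      (simp only [hE, h0, h1, hν', hy, hy'] at e1 e2 e3 e4 e5; linarith)
  have h1 := hψθ S₁
  have h2 := hψθ S₀
  linarith
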